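/- arXiv:1304.7351 — 2 statements merged into one kernel-verified Lean document; each statement's English description precedes it below -/
import Mathlib

section
/- Let Ω ⊆ ℝⁿ be bounded, u : closure(Ω) → ℝ continuous, ε > 0, and u_ε the inf-convolution u_ε(x) = inf_{y ∈ closure(Ω)} { u(y) + ‖y−x‖²/(2ε) }. Let x₀ be an interior point of Ω, suppose (ζ, A) belongs to the second-order subjet J^{2,−}u_ε(x₀) (i.e., u_ε(x₀+ξ) ≥ u_ε(x₀) + ⟨ζ,ξ⟩ + (1/2)⟨Aξ,ξ⟩ + o(‖ξ‖²)), and suppose y₀ ∈ closure(Ω) attains the infimum defining u_ε(x₀). Then y₀ = x₀ − εζ. -/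
open Asymptotics RealInnerProductSpace

theorem stmt_16 {n : ℕ} (Ω : Set (EuclideanSpace ℝ (Fin n))) (hΩ : Bornology.IsBounded Ω)
    (u : EuclideanSpace ℝ (Fin n) → ℝ) (hu : ContinuousOn u (closure Ω))
    (ε : ℝ) (hε : 0 < ε)
    (uε : EuclideanSpace ℝ (Fin n) → ℝ)
    (huε : ∀ x, uε x = sInf {v : ℝ | ∃ y ∈ closure Ω, v = u y + ‖y - x‖ ^ 2 / (2 * ε)})
    (x₀ : EuclideanSpace ℝ (Fin n)) (hx₀ : x₀ ∈ interior Ω)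
    (ζ : EuclideanSpace ℝ (Fin n))
    (A : EuclideanSpace ℝ (Fin n) →L[ℝ] EuclideanSpace ℝ (Fin n))
    (hAsymm : ∀ v w, ⟪A v, w⟫ = ⟪v, A w⟫)
    -- (ζ, A) ∈ J^{2,−} u_ε (x₀):
    (hsub : (fun ξ => max 0 (uε x₀ + ⟪ζ, ξ⟫ + (1 / 2) * ⟪ξ, A ξ⟫ - uε (x₀ + ξ)))
      =o[nhds 0] fun ξ => ‖ξ‖ ^ 2)
    (y₀ : EuclideanSpace ℝ (Fin n)) (hy₀ : y₀ ∈ closure Ω)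
    -- y₀ attains the infimum defining u_ε(x₀):
    (hattain : uε x₀ = u y₀ + ‖y₀ - x₀‖ ^ 2 / (2 * ε)) :
    y₀ = x₀ - ε • ζ := by
  set w : EuclideanSpace ℝ (Fin n) := ζ + ε⁻¹ • (y₀ - x₀) with hwdef
  suffices hw0 : w = 0 by
    have h1 : ε • w = 0 := by rw [hw0, smul_zero]
    rw [hwdef, smul_add, smul_inv_smul₀ hε.ne'] at h1
    have h2 : y₀ - x₀ = -(ε • ζ) := eq_neg_of_add_eq_zero_right h1
    have h3 : y₀ = x₀ + (y₀ - x₀) := by abel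
    rw [h3, h2]; abel
  -- boundedness below of the infimum set
  have hne : (closure Ω).Nonempty := ⟨x₀, subset_closure (interior_subset hx₀)⟩
  have hcpt : IsCompact (closure Ω) := hΩ.isCompact_closure
  obtain ⟨ym, hym, hmin⟩ := hcpt.exists_isMinOn hne hu
  have hbdd : ∀ x, BddBelow {v : ℝ | ∃ y ∈ closure Ω, v = u y + ‖y - x‖ ^ 2 / (2 * ε)} := by
    intro x
    refine ⟨u ym, ?_⟩
    rintro v ⟨y, hy, rfl⟩
    have h1 : u ym ≤ u y := hmin hy
    have h2 : (0:ℝ) ≤ ‖y - x‖ ^ 2 / (2 * ε) := by positivity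
    linarith
  have hle : ∀ ξ, uε (x₀ + ξ) ≤ u y₀ + ‖y₀ - (x₀ + ξ)‖ ^ 2 / (2 * ε) := by
    intro ξ
    rw [huε]
    exact csInf_le (hbdd _) ⟨y₀, hy₀, rfl⟩
  set g : EuclideanSpace ℝ (Fin n) → ℝ :=
    fun ξ => max 0 (uε x₀ + ⟪ζ, ξ⟫ + (1 / 2) * ⟪ξ, A ξ⟫ - uε (x₀ + ξ)) with hgdef
  have hkey : ∀ ξ, ⟪w, ξ⟫ ≤ g ξ + ‖ξ‖ ^ 2 / (2 * ε) - (1 / 2) * ⟪ξ, A ξ⟫ := by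
    intro ξ
    have hg1 : uε x₀ + ⟪ζ, ξ⟫ + (1 / 2) * ⟪ξ, A ξ⟫ - uε (x₀ + ξ) ≤ g ξ := le_max_right _ _
    have hexp : ‖y₀ - (x₀ + ξ)‖ ^ 2 = ‖y₀ - x₀‖ ^ 2 - 2 * ⟪y₀ - x₀, ξ⟫ + ‖ξ‖ ^ 2 := by
      have h : y₀ - (x₀ + ξ) = (y₀ - x₀) - ξ := by abel
      rw [h, norm_sub_sq_real]
    have hle' := hle ξ
    rw [hexp] at hle'
    have hdiv : (‖y₀ - x₀‖ ^ 2 - 2 * ⟪y₀ - x₀, ξ⟫ + ‖ξ‖ ^ 2) / (2 * ε)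
        = ‖y₀ - x₀‖ ^ 2 / (2 * ε) - ε⁻¹ * ⟪y₀ - x₀, ξ⟫ + ‖ξ‖ ^ 2 / (2 * ε) := by
      field_simp
    rw [hdiv] at hle'
    have hinner : ⟪w, ξ⟫ = ⟪ζ, ξ⟫ + ε⁻¹ * ⟪y₀ - x₀, ξ⟫ := by
      rw [hwdef, inner_add_left, real_inner_smul_left]
    rw [hinner]
    linarith
  -- plug ξ = t • w for t > 0
  set K : ℝ := ‖w‖ ^ 2 / (2 * ε) - (1 / 2) * ⟪w, A w⟫ with hKdef
  have hstep : ∀ t : ℝ, 0 < t → ‖w‖ ^ 2 ≤ g (t • w) / t + t * K := by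
    intro t ht
    have h1 := hkey (t • w)
    have h2 : ⟪w, t • w⟫ = t * ‖w‖ ^ 2 := by
      rw [real_inner_smul_right, real_inner_self_eq_norm_sq]
    have h3 : ‖t • w‖ ^ 2 = t ^ 2 * ‖w‖ ^ 2 := by
      rw [norm_smul, mul_pow, Real.norm_eq_abs, sq_abs]
    have h4 : ⟪t • w, A (t • w)⟫ = t ^ 2 * ⟪w, A w⟫ := by
      rw [map_smul, real_inner_smul_left, real_inner_smul_right]; ring
    rw [h2, h3, h4] at h1
    have h5 : t * ‖w‖ ^ 2 ≤ g (t • w) + t ^ 2 * K := by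
      rw [hKdef]
      have : t ^ 2 * (‖w‖ ^ 2 / (2 * ε) - 1 / 2 * ⟪w, A w⟫)
          = t ^ 2 * ‖w‖ ^ 2 / (2 * ε) - 1 / 2 * (t ^ 2 * ⟪w, A w⟫) := by ring
      rw [this]
      linarith
    have h6 : (t * ‖w‖ ^ 2) / t ≤ (g (t • w) + t ^ 2 * K) / t :=
      div_le_div_of_nonneg_right h5 ht.le
    calc ‖w‖ ^ 2 = (t * ‖w‖ ^ 2) / t := by field_simp
      _ ≤ (g (t • w) + t ^ 2 * K) / t := h6
      _ = g (t • w) / t + t * K := by field_simp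
  -- the RHS tends to 0 as t → 0+
  have htw : Filter.Tendsto (fun t : ℝ => t • w) (nhdsWithin 0 (Set.Ioi 0)) (nhds 0) := by
    have : Filter.Tendsto (fun t : ℝ => t • w) (nhds 0) (nhds ((0:ℝ) • w)) :=
      (continuous_id.smul continuous_const).tendsto 0
    rw [zero_smul] at this
    exact this.mono_left nhdsWithin_le_nhds
  have hgo : (fun t : ℝ => g (t • w)) =o[nhdsWithin 0 (Set.Ioi 0)] fun t => ‖t • w‖ ^ 2 :=
    hsub.comp_tendsto htw
  have hbound : ∀ᶠ t in nhdsWithin 0 (Set.Ioi 0), ‖g (t • w) / t‖ ≤ t * ‖w‖ ^ 2 := by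
    have h1 := (hgo.bound one_pos)
    filter_upwards [h1, self_mem_nhdsWithin] with t ht ht'
    have htpos : 0 < t := ht'
    have h3 : ‖t • w‖ ^ 2 = t ^ 2 * ‖w‖ ^ 2 := by
      rw [norm_smul, mul_pow, Real.norm_eq_abs, sq_abs]
    rw [Real.norm_eq_abs, abs_div, abs_of_pos htpos, div_le_iff₀ htpos]
    have h4 : ‖‖t • w‖ ^ 2‖ = t ^ 2 * ‖w‖ ^ 2 := by
      rw [Real.norm_eq_abs, abs_of_nonneg (by positivity), h3]
    calc |g (t • w)| ≤ 1 * ‖‖t • w‖ ^ 2‖ := ht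
      _ = t ^ 2 * ‖w‖ ^ 2 := by rw [one_mul, h4]
      _ = t * ‖w‖ ^ 2 * t := by ring
  have hT1 : Filter.Tendsto (fun t : ℝ => g (t • w) / t) (nhdsWithin 0 (Set.Ioi 0)) (nhds 0) := by
    apply squeeze_zero_norm' hbound
    have : Filter.Tendsto (fun t : ℝ => t * ‖w‖ ^ 2) (nhds 0) (nhds (0 * ‖w‖ ^ 2)) :=
      (continuous_id.mul continuous_const).tendsto 0
    rw [zero_mul] at this
    exact this.mono_left nhdsWithin_le_nhds
  have hT2 : Filter.Tendsto (fun t : ℝ => t * K) (nhdsWithin 0 (Set.Ioi 0)) (nhds 0) := by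
    have : Filter.Tendsto (fun t : ℝ => t * K) (nhds 0) (nhds (0 * K)) :=
      (continuous_id.mul continuous_const).tendsto 0
    rw [zero_mul] at this
    exact this.mono_left nhdsWithin_le_nhds
  have hT : Filter.Tendsto (fun t : ℝ => g (t • w) / t + t * K)
      (nhdsWithin 0 (Set.Ioi 0)) (nhds 0) := by
    have := hT1.add hT2
    rwa [add_zero] at this
  have hfinal : ‖w‖ ^ 2 ≤ 0 := by
    refine ge_of_tendsto hT ?_
    filter_upwards [self_mem_nhdsWithin] with t ht
    exact hstep t ht
  have : ‖w‖ = 0 := by nlinarith [norm_nonneg w]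
  exact norm_eq_zero.mp this
end

section
/- Let Ω ⊆ ℝⁿ be bounded, u continuous on closure(Ω)×[T₀,T₂], u_ε the parabolic inf-convolution, and suppose (p, ζ, A) ∈ P^{2,−}u_ε(x₀,t₀) for an interior point (x₀,t₀) of Ω×(T₀,T₂], and that (y₀,s₀) attains the infimum defining u_ε(x₀,t₀). Then y₀ = x₀ − εζ and s₀ ≥ t₀ − εp. -/
open Set Asymptotics RealInnerProductSpace Filter Topology

private lemma aux_le_zero {a b : ℝ} {f : ℝ → ℝ}
    (hf : f =o[𝓝[>] (0:ℝ)] fun t => t)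
    (h : ∀ t : ℝ, 0 < t → t * a + t ^ 2 * b ≤ f t) : a ≤ 0 := by
  have h1 : Tendsto (fun t => f t / t) (𝓝[>] (0:ℝ)) (𝓝 0) := hf.tendsto_div_nhds_zero
  have h2 : Tendsto (fun t : ℝ => a + t * b) (𝓝[>] (0:ℝ)) (𝓝 a) := by
    have h2' : Tendsto (fun t : ℝ => a + t * b) (𝓝 (0:ℝ)) (𝓝 (a + 0 * b)) :=
      tendsto_const_nhds.add (tendsto_id.mul tendsto_const_nhds)
    simpa using h2'.mono_left nhdsWithin_le_nhds
  have h3 : (fun t : ℝ => a + t * b) ≤ᶠ[𝓝[>] (0:ℝ)] fun t => f t / t := by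
    filter_upwards [self_mem_nhdsWithin] with t ht
    have ht : (0:ℝ) < t := ht
    rw [le_div_iff₀ ht]
    calc (a + t * b) * t = t * a + t ^ 2 * b := by ring
      _ ≤ f t := h t ht
  exact le_of_tendsto_of_tendsto h2 h1 h3

private lemma path_littleO {E : Type*} [NormedAddCommGroup E] [NormedSpace ℝ E]
    {F : E × ℝ → ℝ}
    (hF : F =o[𝓝[{q : E × ℝ | q.2 ≤ 0}] 0] fun q => ‖q.1‖ ^ 2 + |q.2|)
    (γ : ℝ → E × ℝ) (hγ0 : Tendsto γ (𝓝[>] (0:ℝ)) (𝓝 0))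
    (hγS : ∀ᶠ t in 𝓝[>] (0:ℝ), (γ t).2 ≤ 0)
    (hg : (fun t => ‖(γ t).1‖ ^ 2 + |(γ t).2|) =O[𝓝[>] (0:ℝ)] fun t => t) :
    (fun t => F (γ t)) =o[𝓝[>] (0:ℝ)] fun t => t := by
  have hmap : Tendsto γ (𝓝[>] (0:ℝ)) (𝓝[{q : E × ℝ | q.2 ≤ 0}] 0) :=
    tendsto_nhdsWithin_iff.mpr ⟨hγ0, hγS⟩
  exact (hF.comp_tendsto hmap).trans_isBigO hg

theorem stmt_17 {n : ℕ} (Ω : Set (EuclideanSpace ℝ (Fin n))) (hΩ : Bornology.IsBounded Ω)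
    (T₀ T₂ : ℝ) (hT : T₀ < T₂)
    (u : EuclideanSpace ℝ (Fin n) → ℝ → ℝ)
    (hu : ContinuousOn (fun p : EuclideanSpace ℝ (Fin n) × ℝ => u p.1 p.2)
      (closure Ω ×ˢ Icc T₀ T₂))
    (ε : ℝ) (hε : 0 < ε)
    (uε : EuclideanSpace ℝ (Fin n) → ℝ → ℝ)
    (huε : ∀ x₀ t₀, uε x₀ t₀ =
      sInf {v : ℝ | ∃ y ∈ closure Ω, ∃ s ∈ Icc T₀ T₂,
        v = u y s + (1 / (2 * ε)) * (‖y - x₀‖ ^ 2 + |s - t₀| ^ 2)})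
    (x₀ : EuclideanSpace ℝ (Fin n)) (t₀ : ℝ)
    (hx₀ : x₀ ∈ interior Ω) (ht₀ : t₀ ∈ Ioc T₀ T₂)
    (p : ℝ) (ζ : EuclideanSpace ℝ (Fin n))
    (A : EuclideanSpace ℝ (Fin n) →L[ℝ] EuclideanSpace ℝ (Fin n))
    (hAsymm : ∀ v w, ⟪A v, w⟫ = ⟪v, A w⟫)
    -- (p, ζ, A) ∈ P^{2,−} u_ε (x₀, t₀):
    (hsub : (fun q : EuclideanSpace ℝ (Fin n) × ℝ =>
        max 0 (uε x₀ t₀ + ⟪ζ, q.1⟫ + q.2 * p + (1 / 2) * ⟪q.1, A q.1⟫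
          - uε (x₀ + q.1) (t₀ + q.2)))
      =o[𝓝[{q : EuclideanSpace ℝ (Fin n) × ℝ | q.2 ≤ 0}] 0]
        fun q => ‖q.1‖ ^ 2 + |q.2|)
    (y₀ : EuclideanSpace ℝ (Fin n)) (s₀ : ℝ)
    (hy₀ : y₀ ∈ closure Ω) (hs₀ : s₀ ∈ Icc T₀ T₂)
    -- (y₀, s₀) attains the infimum defining u_ε(x₀, t₀):
    (hattain : uε x₀ t₀ = u y₀ s₀ + (1 / (2 * ε)) * (‖y₀ - x₀‖ ^ 2 + |s₀ - t₀| ^ 2)) :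
    y₀ = x₀ - ε • ζ ∧ t₀ - ε * p ≤ s₀ := by
  have hεne : ε ≠ 0 := ne_of_gt hε
  set F : EuclideanSpace ℝ (Fin n) × ℝ → ℝ := fun q =>
    max 0 (uε x₀ t₀ + ⟪ζ, q.1⟫ + q.2 * p + (1 / 2) * ⟪q.1, A q.1⟫
      - uε (x₀ + q.1) (t₀ + q.2)) with hF
  -- lower bound on u via compactness
  have hKcpt : IsCompact (closure Ω ×ˢ Icc T₀ T₂) :=
    hΩ.isCompact_closure.prod isCompact_Icc
  obtain ⟨C, hC⟩ := hKcpt.bddBelow_image hu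
  have hCle : ∀ y ∈ closure Ω, ∀ s ∈ Icc T₀ T₂, C ≤ u y s := by
    intro y hy s hs
    exact hC ⟨(y, s), ⟨hy, hs⟩, rfl⟩
  have hbdd : ∀ (x : EuclideanSpace ℝ (Fin n)) (t : ℝ), BddBelow {v : ℝ | ∃ y ∈ closure Ω, ∃ s ∈ Icc T₀ T₂,
      v = u y s + (1 / (2 * ε)) * (‖y - x‖ ^ 2 + |s - t| ^ 2)} := by
    intro x t
    refine ⟨C, ?_⟩
    rintro v ⟨y, hy, s, hs, rfl⟩
    have h1 := hCle y hy s hs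
    have h2 : 0 ≤ (1 / (2 * ε)) * (‖y - x‖ ^ 2 + |s - t| ^ 2) := by positivity
    linarith
  have hle : ∀ (ξ : EuclideanSpace ℝ (Fin n)) (σ : ℝ), uε (x₀ + ξ) (t₀ + σ) ≤
      u y₀ s₀ + (1 / (2 * ε)) * (‖y₀ - (x₀ + ξ)‖ ^ 2 + |s₀ - (t₀ + σ)| ^ 2) := by
    intro ξ σ
    rw [huε]
    exact csInf_le (hbdd _ _) ⟨y₀, hy₀, s₀, hs₀, rfl⟩
  have hkey : ∀ q : EuclideanSpace ℝ (Fin n) × ℝ, uε x₀ t₀ + ⟪ζ, q.1⟫ + q.2 * p + (1 / 2) * ⟪q.1, A q.1⟫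
      - uε (x₀ + q.1) (t₀ + q.2) ≤ F q := fun q => le_max_right _ _
  set c : EuclideanSpace ℝ (Fin n) := ζ + ε⁻¹ • (y₀ - x₀) with hc
  -- Path A : horizontal direction
  have hA : ∀ t : ℝ, 0 < t →
      t * ‖c‖ ^ 2 + t ^ 2 * (⟪c, A c⟫ / 2 - ‖c‖ ^ 2 / (2 * ε)) ≤ F (t • c, 0) := by
    intro t ht
    have hk := hkey (t • c, 0)
    have hl := hle (t • c) 0
    have e1 : ⟪ζ, t • c⟫ = t * ⟪ζ, c⟫ := real_inner_smul_right _ _ _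
    have e2 : ⟪t • c, A (t • c)⟫ = t ^ 2 * ⟪c, A c⟫ := by
      rw [map_smul, real_inner_smul_left, real_inner_smul_right]; ring
    have e3 : ‖y₀ - (x₀ + t • c)‖ ^ 2
        = ‖y₀ - x₀‖ ^ 2 - 2 * (t * ⟪y₀ - x₀, c⟫) + t ^ 2 * ‖c‖ ^ 2 := by
      have h : y₀ - (x₀ + t • c) = (y₀ - x₀) - t • c := by abel
      rw [h, norm_sub_sq_real, real_inner_smul_right, norm_smul, mul_pow,
        Real.norm_eq_abs, sq_abs]
    have e4 : ‖c‖ ^ 2 = ⟪ζ, c⟫ + ε⁻¹ * ⟪y₀ - x₀, c⟫ := by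
      rw [← real_inner_self_eq_norm_sq, hc, inner_add_left, real_inner_smul_left]
    have habs : |s₀ - (t₀ + 0)| ^ 2 = |s₀ - t₀| ^ 2 := by norm_num
    simp only at hk
    rw [hattain, e1, e2] at hk
    rw [e3, habs] at hl
    have e4t : t * ‖c‖ ^ 2 = t * ⟪ζ, c⟫ + t * (ε⁻¹ * ⟪y₀ - x₀, c⟫) := by rw [e4]; ring
    have hfrac : (1 / (2 * ε)) * (2 * (t * ⟪y₀ - x₀, c⟫)) = t * (ε⁻¹ * ⟪y₀ - x₀, c⟫) := by
      field_simp
    ring_nf at hk hl e4t hfrac ⊢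
    linarith [hk, hl, e4t, hfrac]
  -- Path B : backwards in time
  have hB : ∀ t : ℝ, 0 < t →
      t * (-p - (s₀ - t₀) * ε⁻¹) + t ^ 2 * (-(1 / (2 * ε))) ≤ F ((0 : EuclideanSpace ℝ (Fin n)), -t) := by
    intro t ht
    have hk := hkey ((0 : EuclideanSpace ℝ (Fin n)), -t)
    have hl := hle (0 : EuclideanSpace ℝ (Fin n)) (-t)
    simp only [inner_zero_right, map_zero, inner_zero_left, add_zero, mul_zero] at hk hl
    have e6 : |s₀ - (t₀ + -t)| ^ 2 = (s₀ - t₀ + t) ^ 2 := by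
      rw [sq_abs]; ring
    have e7 : |s₀ - t₀| ^ 2 = (s₀ - t₀) ^ 2 := sq_abs _
    rw [e6] at hl
    rw [hattain, e7] at hk
    have hfrac : (1 / (2 * ε)) * (2 * ((s₀ - t₀) * t)) = t * ((s₀ - t₀) * ε⁻¹) := by
      field_simp
    ring_nf at hk hl hfrac ⊢
    linarith [hk, hl, hfrac]
  -- conclude c = 0
  have hγA0 : Tendsto (fun t : ℝ => ((t • c, 0) : EuclideanSpace ℝ (Fin n) × ℝ)) (𝓝[>] (0:ℝ)) (𝓝 0) := by
    have hco : Tendsto (fun t : ℝ => ((t • c, 0) : EuclideanSpace ℝ (Fin n) × ℝ)) (𝓝 (0:ℝ))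
        (𝓝 (((0:ℝ) • c, 0) : EuclideanSpace ℝ (Fin n) × ℝ)) :=
      ((continuous_id.smul continuous_const).prodMk continuous_const).tendsto 0
    simp only [zero_smul] at hco
    exact hco.mono_left nhdsWithin_le_nhds
  have hgA : (fun t : ℝ => ‖((t • c : EuclideanSpace ℝ (Fin n)))‖ ^ 2 + |(0:ℝ)|) =O[𝓝[>] (0:ℝ)] fun t => t := by
    rw [isBigO_iff]
    refine ⟨‖c‖ ^ 2, ?_⟩
    filter_upwards [Ioo_mem_nhdsGT_of_mem (by norm_num : (0:ℝ) ∈ Ico (0:ℝ) 1)] with t ht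
    have h1 : 0 < t := ht.1
    have h2 : t < 1 := ht.2
    have hn : ‖t • c‖ = t * ‖c‖ := by
      rw [norm_smul, Real.norm_eq_abs, abs_of_pos h1]
    rw [hn]
    simp only [abs_zero, add_zero, Real.norm_eq_abs]
    rw [abs_of_nonneg (by positivity : (0:ℝ) ≤ (t * ‖c‖) ^ 2), abs_of_pos h1]
    nlinarith [norm_nonneg c, sq_nonneg ‖c‖]
  have hoA : (fun t : ℝ => F (t • c, 0)) =o[𝓝[>] (0:ℝ)] fun t => t :=
    path_littleO hsub (fun t => (t • c, 0)) hγA0 (Eventually.of_forall fun t => le_refl 0) hgA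
  have hcnorm : ‖c‖ ^ 2 ≤ 0 :=
    aux_le_zero hoA (fun t ht => hA t ht)
  have hc0 : c = 0 := by
    have h0 : ‖c‖ ^ 2 = 0 := le_antisymm hcnorm (by positivity)
    exact norm_eq_zero.mp (pow_eq_zero_iff two_ne_zero |>.mp h0)
  constructor
  · -- y₀ = x₀ - ε • ζ
    have h5 : ε • (ζ + ε⁻¹ • (y₀ - x₀)) = 0 := by rw [← hc, hc0, smul_zero]
    rw [smul_add, smul_inv_smul₀ hεne] at h5
    have h8 : y₀ + ε • ζ = x₀ := sub_eq_zero.mp (by rw [← h5]; abel)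
    exact eq_sub_iff_add_eq.mpr h8
  · -- t₀ - ε * p ≤ s₀
    have hγB0 : Tendsto (fun t : ℝ => (((0 : EuclideanSpace ℝ (Fin n)), -t) : EuclideanSpace ℝ (Fin n) × ℝ)) (𝓝[>] (0:ℝ)) (𝓝 0) := by
      have hco : Tendsto (fun t : ℝ => (((0 : EuclideanSpace ℝ (Fin n)), -t) : EuclideanSpace ℝ (Fin n) × ℝ)) (𝓝 (0:ℝ))
          (𝓝 (((0 : EuclideanSpace ℝ (Fin n)), -(0:ℝ)) : EuclideanSpace ℝ (Fin n) × ℝ)) :=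
        (continuous_const.prodMk continuous_id.neg).tendsto 0
      simp only [neg_zero] at hco
      exact hco.mono_left nhdsWithin_le_nhds
    have hgB : (fun t : ℝ => ‖((0 : EuclideanSpace ℝ (Fin n)))‖ ^ 2 + |(-t : ℝ)|) =O[𝓝[>] (0:ℝ)] fun t => t := by
      rw [isBigO_iff]
      refine ⟨1, ?_⟩
      filter_upwards [self_mem_nhdsWithin] with t ht
      have h1 : (0:ℝ) < t := ht
      simp [abs_of_pos h1, Real.norm_eq_abs, abs_of_nonneg h1.le]
    have hoB : (fun t : ℝ => F ((0 : EuclideanSpace ℝ (Fin n)), -t)) =o[𝓝[>] (0:ℝ)] fun t => t :=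
      path_littleO hsub (fun t => ((0 : EuclideanSpace ℝ (Fin n)), -t)) hγB0
        (by filter_upwards [self_mem_nhdsWithin] with t ht; exact neg_nonpos.mpr (le_of_lt ht)) hgB
    have hble : -p - (s₀ - t₀) * ε⁻¹ ≤ 0 :=
      aux_le_zero hoB (fun t ht => hB t ht)
    have h9 : 0 ≤ ε * (p + (s₀ - t₀) * ε⁻¹) := mul_nonneg hε.le (by linarith)
    have h10 : ε * (p + (s₀ - t₀) * ε⁻¹) = ε * p + (s₀ - t₀) := by field_simp
    linarith
end
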